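/- Let V be a finite-dimensional vector space over a field F with more than two elements. Then every linear endomorphism of V is a sum of two linear automorphisms. -/

import Mathlib

lemma exists_ne_zero_ne {F : Type*} [Field F]
    (hF : ∃ a b c : F, a ≠ b ∧ a ≠ c ∧ b ≠ c) (x : F) : ∃ y : F, y ≠ 0 ∧ y ≠ x := by
  obtain ⟨a, b, c, hab, hac, hbc⟩ := hF
  by_cases ha0 : a = 0
  · subst ha0
    by_cases hbx : b = x
    · exact ⟨c, Ne.symm hac, hbx ▸ hbc.symm⟩
    · exact ⟨b, Ne.symm hab, hbx⟩
  · by_cases hax : a = x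
    · subst hax
      by_cases hb0 : b = 0
      · exact ⟨c, fun h => hbc (hb0.trans h.symm), hac.symm⟩
      · exact ⟨b, hb0, hab.symm⟩
    · exact ⟨a, ha0, hax⟩

lemma matrix_sum_two_units {F : Type*} [Field F]
    (hF : ∃ a b c : F, a ≠ b ∧ a ≠ c ∧ b ≠ c) (n : ℕ)
    (A : Matrix (Fin n) (Fin n) F) :
    ∃ B C : Matrix (Fin n) (Fin n) F, IsUnit B ∧ IsUnit C ∧ A = B + C := by
  choose d hd0 hdA using exists_ne_zero_ne hF
  set B : Matrix (Fin n) (Fin n) F :=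
    Matrix.of fun i j => if i < j then 0 else if i = j then d (A i i) else A i j with hB
  set C : Matrix (Fin n) (Fin n) F :=
    Matrix.of fun i j => if i < j then A i j else if i = j then A i i - d (A i i) else 0 with hC
  refine ⟨B, C, ?_, ?_, ?_⟩
  · rw [Matrix.isUnit_iff_isUnit_det]
    have hdet : B.det = ∏ i, B i i := by
      apply Matrix.det_of_lowerTriangular
      intro i j h
      simp only [hB, Matrix.of_apply, Matrix.BlockTriangular] at *
      simp only [OrderDual.toDual_lt_toDual] at h
      simp [if_pos h]
    rw [hdet]
    refine (Finset.prod_ne_zero_iff.mpr fun i _ => ?_).isUnit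
    have : B i i = d (A i i) := by simp [hB]
    rw [this]; exact hd0 _
  · rw [Matrix.isUnit_iff_isUnit_det]
    have hdet : C.det = ∏ i, C i i := by
      apply Matrix.det_of_upperTriangular
      intro i j h
      simp only [hC, Matrix.of_apply, Matrix.BlockTriangular, id] at *
      rw [if_neg (by omega), if_neg (by omega)]
    rw [hdet]
    refine (Finset.prod_ne_zero_iff.mpr fun i _ => ?_).isUnit
    have : C i i = A i i - d (A i i) := by simp [hC]
    rw [this]; exact sub_ne_zero.mpr fun h => (hdA (A i i)) h.symm
  · ext i j
    simp only [hB, hC, Matrix.add_apply, Matrix.of_apply]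
    rcases lt_trichotomy i j with h | h | h
    · rw [if_pos h, if_pos h, zero_add]
    · rw [if_neg h.not_lt, if_neg h.not_lt, if_pos h, if_pos h, h]
      ring
    · rw [if_neg h.not_gt, if_neg h.not_gt, if_neg h.ne', if_neg h.ne', add_zero]

/-- Over a field `F` with more than two elements, every linear endomorphism of a
finite-dimensional `F`-vector space is a sum of two linear automorphisms. -/
theorem sum_two_automorphisms_of_finiteDimensional (F V : Type*) [Field F] [AddCommGroup V]
    [Module F V] [FiniteDimensional F V]
    (hF : ∃ a b c : F, a ≠ b ∧ a ≠ c ∧ b ≠ c) :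
    ∀ f : Module.End F V, ∃ u v : (Module.End F V)ˣ, f = ↑u + ↑v := by
  intro f
  set e := algEquivMatrix (Module.finBasis F V)
  obtain ⟨B, C, hB, hC, hBC⟩ := matrix_sum_two_units hF _ (e f)
  have hB' : IsUnit (e.symm B) := hB.map e.symm
  have hC' : IsUnit (e.symm C) := hC.map e.symm
  refine ⟨hB'.unit, hC'.unit, ?_⟩
  have : f = e.symm (B + C) := by rw [← hBC]; simp
  rw [this, map_add]
  simp [IsUnit.unit_spec]
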